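/- Let G be a locally compact Hausdorff group, H a closed subgroup, and μ a left Haar measure on G normalized together with Haar measures on H and G/H so that ∫_G f(t) dt = ∫_{G/H} ∫_H f(ts) ds d(tH) for all continuous compactly supported f (H normal, so G/H is a group). Then for any f ∈ C_c(H) and ξ ∈ C_c(G) ⊂ L²(G), the operator norm estimate ‖∫_H f(t) λ^G_t dt restricted to ξ‖ ≤ ‖∫_H f(t) λ^H_t dt‖ · ‖ξ‖_{L²(G)} holds, where λ^G and λ^H are the left regular representations of G and H. -/

import Mathlib

open MeasureTheory

lemma integral_complex_ofReal' {α : Type*} [MeasurableSpace α] {m : MeasureTheory.Measure α}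
    (g : α → ℝ) : ∫ a, ((g a : ℝ) : ℂ) ∂m = ((∫ a, g a ∂m : ℝ) : ℂ) :=
  integral_ofReal

lemma exists_ne_zero_of_integral_ne_zero {α : Type*} [MeasurableSpace α] {μ : Measure α}
    {F : α → ℂ} (h : ∫ a, F a ∂μ ≠ 0) : ∃ a, F a ≠ 0 := by
  by_contra hc
  push_neg at hc
  exact h (by rw [show F = fun _ => (0 : ℂ) from funext hc, integral_zero])

theorem conv_cont {α X : Type*} [TopologicalSpace α] [MeasurableSpace α] [OpensMeasurableSpace α]
    [TopologicalSpace X]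
    (ν : Measure α) [IsFiniteMeasureOnCompacts ν]
    (f : α → ℂ) (hf : Continuous f) (hfc : HasCompactSupport f)
    (k : α → X → ℂ) (hk : Continuous fun p : α × X => k p.1 p.2) :
    Continuous fun x => ∫ t, f t * k t x ∂ν := by
  rw [← continuousOn_univ]
  apply continuousOn_integral_of_compact_support hfc (s := Set.univ)
  · apply Continuous.continuousOn
    exact (hf.comp continuous_snd).mul (hk.comp (continuous_snd.prodMk continuous_fst))
  · intro p t _ ht
    simp [image_eq_zero_of_notMem_tsupport ht]

section Conj

variable {G : Type*} [Group G]

/-- Conjugation by `x⁻¹` as an automorphism of a normal subgroup. -/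
noncomputable def conjE (H : Subgroup G) (hHn : H.Normal) (x : G) : ↥H ≃* ↥H where
  toFun t := ⟨x⁻¹ * ↑t * x, by simpa using hHn.conj_mem _ t.2 x⁻¹⟩
  invFun t := ⟨x * ↑t * x⁻¹, hHn.conj_mem _ t.2 x⟩
  left_inv t := Subtype.ext (show x * (x⁻¹ * ↑t * x) * x⁻¹ = ↑t by group)
  right_inv t := Subtype.ext (show x⁻¹ * (x * ↑t * x⁻¹) * x = ↑t by group)
  map_mul' a b := Subtype.ext
    (show x⁻¹ * (↑a * ↑b) * x = (x⁻¹ * ↑a * x) * (x⁻¹ * ↑b * x) by group)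

@[simp] lemma conjE_coe (H : Subgroup G) (hHn : H.Normal) (x : G) (t : ↥H) :
    ((conjE H hHn x t : ↥H) : G) = x⁻¹ * ↑t * x := rfl

@[simp] lemma conjE_symm_coe (H : Subgroup G) (hHn : H.Normal) (x : G) (t : ↥H) :
    (((conjE H hHn x).symm t : ↥H) : G) = x * ↑t * x⁻¹ := rfl

variable [TopologicalSpace G] [IsTopologicalGroup G]

lemma conjE_cont (H : Subgroup G) (hHn : H.Normal) (x : G) : Continuous (conjE H hHn x) :=
  Continuous.subtype_mk ((continuous_const.mul continuous_subtype_val).mul continuous_const) _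

lemma conjE_symm_cont (H : Subgroup G) (hHn : H.Normal) (x : G) :
    Continuous (conjE H hHn x).symm :=
  Continuous.subtype_mk ((continuous_const.mul continuous_subtype_val).mul continuous_const) _

end Conj

section Core

variable {G : Type*} [Group G] [TopologicalSpace G] [IsTopologicalGroup G]
    [LocallyCompactSpace G] [T2Space G] [MeasurableSpace G] [BorelSpace G]

/-- Core pointwise (in the coset) estimate. -/
theorem stmt18_core
    (H : Subgroup G) (hHc : IsClosed (H : Set G)) (hHn : H.Normal)
    [MeasurableSpace ↥H] [BorelSpace ↥H] (ν : Measure ↥H) [ν.IsHaarMeasure]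
    (f : ↥H → ℂ) (hf : Continuous f) (hfc : HasCompactSupport f)
    (ξ : G → ℂ) (hξ : Continuous ξ) (hξc : HasCompactSupport ξ)
    (C : ℝ) (hC : 0 ≤ C)
    (hCbound : ∀ η : ↥H → ℂ, Continuous η → HasCompactSupport η →
      ∫ h, ‖∫ t, f t * η (t⁻¹ * h) ∂ν‖ ^ 2 ∂ν ≤ C ^ 2 * ∫ h, ‖η h‖ ^ 2 ∂ν)
    (x : G) :
    ∫ h : ↥H, ‖∫ t : ↥H, f t * ξ ((↑t)⁻¹ * (x * ↑h)) ∂ν‖ ^ 2 ∂ν ≤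
      C ^ 2 * ∫ h : ↥H, ‖ξ (x * ↑h)‖ ^ 2 ∂ν := by
  haveI : LocallyCompactSpace ↥H := hHc.locallyCompactSpace
  set e : ↥H ≃* ↥H := conjE H hHn x with he_def
  have he : Continuous e := conjE_cont H hHn x
  have hesymm : Continuous e.symm := conjE_symm_cont H hHn x
  set ν' : Measure ↥H := ν.map e with hν'
  haveI hν'haar : ν'.IsHaarMeasure := e.isHaarMeasure_map (μ := ν) he hesymm
  set c : NNReal := Measure.haarScalarFactor ν' ν with hc_def
  have hc_pos : 0 < (c : ℝ) := Measure.haarScalarFactor_pos_of_isHaarMeasure ν' ν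
  -- real scalar identity
  have smulR : ∀ F : ↥H → ℝ, Continuous F → HasCompactSupport F →
      ∫ k, F k ∂ν' = (c : ℝ) * ∫ k, F k ∂ν := by
    intro F hF hFc
    rw [Measure.integral_isMulLeftInvariant_eq_smul_of_hasCompactSupport ν' ν hF hFc,
      integral_smul_nnreal_measure]
    simp [NNReal.smul_def]
    exact Or.inl rfl
  -- complex scalar identity
  have smulC : ∀ F : ↥H → ℂ, Continuous F → HasCompactSupport F →
      ∫ k, F k ∂ν' = ((c : ℝ) : ℂ) * ∫ k, F k ∂ν := by
    intro F hF hFc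
    have hi' : Integrable F ν' := hF.integrable_of_hasCompactSupport hFc
    have hi : Integrable F ν := hF.integrable_of_hasCompactSupport hFc
    rw [← integral_coe_re_add_coe_im hi', ← integral_coe_re_add_coe_im hi,
      integral_ofReal, integral_ofReal, integral_ofReal, integral_ofReal,
      smulR (fun k => RCLike.re (F k)) (RCLike.continuous_re.comp hF) (hFc.comp_left (by simp)),
      smulR (fun k => RCLike.im (F k)) (RCLike.continuous_im.comp hF) (hFc.comp_left (by simp))]
    have hco : ∀ r : ℝ, (RCLike.ofReal r : ℂ) = Complex.ofReal r := fun r => rfl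
    simp only [hco]
    push_cast
    ring
  -- the translated vector η and related objects
  set η : ↥H → ℂ := fun h => ξ (x * ↑h) with hη_def
  have hηcont : Continuous η := hξ.comp (continuous_const.mul continuous_subtype_val)
  have hηsupp : HasCompactSupport η := by
    apply HasCompactSupport.of_support_subset_isCompact
      (K := (Subtype.val : ↥H → G) ⁻¹' ((fun g => x⁻¹ * g) '' tsupport ξ))
    · exact hHc.isClosedEmbedding_subtypeVal.isCompact_preimage
        (hξc.image (continuous_const.mul continuous_id))
    · intro h hh
      exact ⟨x * ↑h, subset_tsupport ξ hh, by group⟩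
  set ft : ↥H → ℂ := fun u => f (e.symm u) with hft_def
  have hftcont : Continuous ft := hf.comp hesymm
  have hftsupp : HasCompactSupport ft := by
    apply HasCompactSupport.of_support_subset_isCompact (hfc.image he) (K := ⇑e '' tsupport f)
    intro u hu
    exact ⟨e.symm u, subset_tsupport f hu, by simp⟩
  set K : ↥H → ℂ := fun k => ∫ u, ft u * η (u⁻¹ * k) ∂ν with hK_def
  have hKcont : Continuous K := by
    apply conv_cont ν ft hftcont hftsupp
    exact hηcont.comp ((continuous_fst.inv).mul continuous_snd)
  have hKsupp : HasCompactSupport K := by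
    apply HasCompactSupport.of_support_subset_isCompact
      ((hftsupp.prod hηsupp).image continuous_mul)
      (K := (fun p : ↥H × ↥H => p.1 * p.2) '' (tsupport ft ×ˢ tsupport η))
    intro k hk
    obtain ⟨u, hu⟩ := _root_.exists_ne_zero_of_integral_ne_zero hk
    rcases mul_ne_zero_iff.1 hu with ⟨hu1, hu2⟩
    exact ⟨(u, u⁻¹ * k), Set.mk_mem_prod (subset_tsupport _ hu1) (subset_tsupport _ hu2),
      by simp⟩
  have hinteg_cont : Continuous (fun u : ↥H => ft u * η (u⁻¹ * u)) := by
    exact hftcont.mul (hηcont.comp ((continuous_inv).mul continuous_id))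
  -- key identity E1
  have E1 : ∀ k : ↥H, ∫ t, f t * η ((e t)⁻¹ * k) ∂ν = ((c : ℝ) : ℂ) * K k := by
    intro k
    have hcont1 : Continuous fun u : ↥H => ft u * η (u⁻¹ * k) :=
      hftcont.mul (hηcont.comp ((continuous_inv).mul continuous_const))
    have step1 : ∫ t, f t * η ((e t)⁻¹ * k) ∂ν
        = ∫ t, (fun u => ft u * η (u⁻¹ * k)) (e t) ∂ν := by
      apply integral_congr_ae
      filter_upwards with t
      simp [hft_def]
    have step2 : ∫ u, (fun u => ft u * η (u⁻¹ * k)) u ∂ν'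
        = ∫ t, (fun u => ft u * η (u⁻¹ * k)) (e t) ∂ν := by
      rw [hν']
      exact integral_map he.measurable.aemeasurable hcont1.aestronglyMeasurable
    rw [step1, ← step2]
    exact smulC _ hcont1 hftsupp.mul_right
  -- E2 : rewrite the LHS integrand
  have E2 : ∀ h : ↥H, (∫ t : ↥H, f t * ξ ((↑t)⁻¹ * (x * ↑h)) ∂ν) = ((c : ℝ) : ℂ) * K h := by
    intro h
    rw [← E1 h]
    apply integral_congr_ae
    filter_upwards with t
    congr 1
    show ξ ((↑t)⁻¹ * (x * ↑h)) = ξ (x * ↑((e t)⁻¹ * h))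
    congr 1
    push_cast [he_def, conjE_coe]
    group
  -- apply the bound to η ∘ e
  have hη'cont : Continuous (fun h => η (e h)) := hηcont.comp he
  have hη'supp : HasCompactSupport (fun h => η (e h)) := by
    apply HasCompactSupport.of_support_subset_isCompact (hηsupp.image hesymm)
      (K := ⇑e.symm '' tsupport η)
    intro h hh
    exact ⟨e h, subset_tsupport _ hh, by simp⟩
  have hCb := hCbound _ hη'cont hη'supp
  set X : ℝ := ∫ h, ‖K h‖ ^ 2 ∂ν with hX_def
  set Y : ℝ := ∫ h, ‖η h‖ ^ 2 ∂ν with hY_def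
  have hXnn : 0 ≤ X := integral_nonneg fun h => by positivity
  have hYnn : 0 ≤ Y := integral_nonneg fun h => by positivity
  have hnorm : ∀ z : ℂ, ‖((c : ℝ) : ℂ) * z‖ ^ 2 = (c : ℝ) ^ 2 * ‖z‖ ^ 2 := by
    intro z
    rw [norm_mul, mul_pow, Complex.norm_real, Real.norm_eq_abs, NNReal.abs_eq]
  have hKsq_cont : Continuous fun k : ↥H => ‖K k‖ ^ 2 := (hKcont.norm).pow 2
  have hKsq_supp : HasCompactSupport fun k : ↥H => ‖K k‖ ^ 2 := by
    have : (fun k : ↥H => ‖K k‖ ^ 2) = (fun z : ℂ => ‖z‖ ^ 2) ∘ K := rfl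
    rw [this]
    exact hKsupp.comp_left (by simp)
  have hηsq_cont : Continuous fun k : ↥H => ‖η k‖ ^ 2 := (hηcont.norm).pow 2
  have hηsq_supp : HasCompactSupport fun k : ↥H => ‖η k‖ ^ 2 := by
    have : (fun k : ↥H => ‖η k‖ ^ 2) = (fun z : ℂ => ‖z‖ ^ 2) ∘ η := rfl
    rw [this]
    exact hηsupp.comp_left (by simp)
  -- LHS of hCb
  have hL : ∫ h, ‖∫ t, f t * η (e (t⁻¹ * h)) ∂ν‖ ^ 2 ∂ν = (c : ℝ) ^ 2 * ((c : ℝ) * X) := by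
    have r1 : ∀ h : ↥H, ∫ t, f t * η (e (t⁻¹ * h)) ∂ν = ((c : ℝ) : ℂ) * K (e h) := by
      intro h
      rw [← E1 (e h)]
      apply integral_congr_ae
      filter_upwards with t
      congr 2
      rw [map_mul, map_inv]
    calc ∫ h, ‖∫ t, f t * η (e (t⁻¹ * h)) ∂ν‖ ^ 2 ∂ν
        = ∫ h, (c : ℝ) ^ 2 * ‖K (e h)‖ ^ 2 ∂ν := by
          apply integral_congr_ae; filter_upwards with h; rw [r1 h, hnorm]
      _ = (c : ℝ) ^ 2 * ∫ h, (fun k => ‖K k‖ ^ 2) (e h) ∂ν := by rw [integral_const_mul]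
      _ = (c : ℝ) ^ 2 * ∫ k, ‖K k‖ ^ 2 ∂ν' := by
          rw [hν']
          congr 1
          exact (integral_map he.measurable.aemeasurable hKsq_cont.aestronglyMeasurable).symm
      _ = (c : ℝ) ^ 2 * ((c : ℝ) * X) := by rw [smulR _ hKsq_cont hKsq_supp]
  -- RHS of hCb
  have hR : ∫ h, ‖η (e h)‖ ^ 2 ∂ν = (c : ℝ) * Y := by
    have : ∫ h, (fun k => ‖η k‖ ^ 2) (e h) ∂ν = ∫ k, ‖η k‖ ^ 2 ∂ν' := by
      rw [hν']
      exact (integral_map he.measurable.aemeasurable hηsq_cont.aestronglyMeasurable).symm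
    rw [show (fun h => ‖η (e h)‖ ^ 2) = fun h => (fun k => ‖η k‖ ^ 2) (e h) from rfl] at *
    rw [this, smulR _ hηsq_cont hηsq_supp]
  rw [hL, hR] at hCb
  -- conclude
  have hXY : (c : ℝ) ^ 2 * X ≤ C ^ 2 * Y := by nlinarith [sq_nonneg C, hc_pos, hXnn, hYnn]
  calc ∫ h : ↥H, ‖∫ t : ↥H, f t * ξ ((↑t)⁻¹ * (x * ↑h)) ∂ν‖ ^ 2 ∂ν
      = ∫ h, (c : ℝ) ^ 2 * ‖K h‖ ^ 2 ∂ν := by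
        apply integral_congr_ae; filter_upwards with h; rw [E2 h, hnorm]
    _ = (c : ℝ) ^ 2 * X := by rw [integral_const_mul]
    _ ≤ C ^ 2 * Y := hXY
    _ = C ^ 2 * ∫ h : ↥H, ‖ξ (x * ↑h)‖ ^ 2 ∂ν := rfl

end Core

/-- Let `G` be a locally compact Hausdorff group, `H` a closed
normal subgroup, `μ` a left Haar measure on `G`, `ν` a left Haar measure on `H` and
`ρ` a measure on `G/H`, normalized so that `∫_G f dμ = ∫_{G/H} ∫_H f (t s) dν s dρ`
for continuous compactly supported `f`. Then for `f ∈ C_c(H)` and `ξ ∈ C_c(G) ⊆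
L²(G)`, `‖λ^G(f) ξ‖ ≤ ‖λ^H(f)‖ ‖ξ‖`: if `C ≥ 0` bounds the integrated form of `λ^H`
at `f` (as an operator on `L²(H)`, tested on `C_c(H)`), then
`‖∫_H f t · (λ^G_t ξ) dν t‖_{L²(μ)} ≤ C ‖ξ‖_{L²(μ)}` (stated with squared norms). -/
theorem stmt18 {G : Type*} [Group G] [TopologicalSpace G] [IsTopologicalGroup G]
    [LocallyCompactSpace G] [T2Space G] [MeasurableSpace G] [BorelSpace G]
    (μ : Measure G) [μ.IsHaarMeasure]
    (H : Subgroup G) (hHc : IsClosed (H : Set G)) (hHn : H.Normal)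
    [MeasurableSpace ↥H] [BorelSpace ↥H] (ν : Measure ↥H) [ν.IsHaarMeasure]
    [MeasurableSpace (G ⧸ H)] (ρ : Measure (G ⧸ H))
    (hcompat : ∀ f : G → ℂ, Continuous f → HasCompactSupport f →
      ∀ g : G ⧸ H → ℂ, (∀ x : G, g (QuotientGroup.mk x) = ∫ t : ↥H, f (x * ↑t) ∂ν) →
        ∫ x, f x ∂μ = ∫ q, g q ∂ρ)
    (f : ↥H → ℂ) (hf : Continuous f) (hfc : HasCompactSupport f)
    (ξ : G → ℂ) (hξ : Continuous ξ) (hξc : HasCompactSupport ξ)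
    (C : ℝ) (hC : 0 ≤ C)
    (hCbound : ∀ η : ↥H → ℂ, Continuous η → HasCompactSupport η →
      ∫ h, ‖∫ t, f t * η (t⁻¹ * h) ∂ν‖ ^ 2 ∂ν ≤ C ^ 2 * ∫ h, ‖η h‖ ^ 2 ∂ν) :
    ∫ s, ‖∫ t : ↥H, f t * ξ ((↑t)⁻¹ * s) ∂ν‖ ^ 2 ∂μ ≤ C ^ 2 * ∫ s, ‖ξ s‖ ^ 2 ∂μ := by
  haveI : LocallyCompactSpace ↥H := hHc.locallyCompactSpace
  set Ig : G → ℂ := fun s => ∫ t : ↥H, f t * ξ ((↑t)⁻¹ * s) ∂ν with hIg_def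
  show ∫ s, ‖Ig s‖ ^ 2 ∂μ ≤ C ^ 2 * ∫ s, ‖ξ s‖ ^ 2 ∂μ
  have hIgcont : Continuous Ig := conv_cont ν f hf hfc (fun t s => ξ ((↑t)⁻¹ * s))
      (hξ.comp (((continuous_subtype_val.comp continuous_fst).inv).mul continuous_snd))
  have hIgsupp : HasCompactSupport Ig := by
    apply HasCompactSupport.of_support_subset_isCompact
      ((hfc.prod hξc).image ((continuous_subtype_val.comp continuous_fst).mul continuous_snd))
      (K := (fun p : ↥H × G => (↑p.1 : G) * p.2) '' (tsupport f ×ˢ tsupport ξ))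
    intro s hs
    obtain ⟨t, ht⟩ := _root_.exists_ne_zero_of_integral_ne_zero hs
    rcases mul_ne_zero_iff.1 ht with ⟨ht1, ht2⟩
    exact ⟨(t, (↑t)⁻¹ * s), Set.mk_mem_prod (subset_tsupport _ ht1) (subset_tsupport _ ht2),
      by simp⟩
  have hIgsq : HasCompactSupport fun s => ((‖Ig s‖ ^ 2 : ℝ) : ℂ) := by
    have : (fun s => ((‖Ig s‖ ^ 2 : ℝ) : ℂ)) = (fun z : ℂ => ((‖z‖ ^ 2 : ℝ) : ℂ)) ∘ Ig := rfl
    rw [this]; exact hIgsupp.comp_left (by simp)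
  have hξsq : HasCompactSupport fun s => ((‖ξ s‖ ^ 2 : ℝ) : ℂ) := by
    have : (fun s => ((‖ξ s‖ ^ 2 : ℝ) : ℂ)) = (fun z : ℂ => ((‖z‖ ^ 2 : ℝ) : ℂ)) ∘ ξ := rfl
    rw [this]; exact hξc.comp_left (by simp)
  set A : G ⧸ H → ℝ := fun q => ∫ h : ↥H, ‖Ig (Quotient.out q * ↑h)‖ ^ 2 ∂ν with hA_def
  set B : G ⧸ H → ℝ := fun q => ∫ h : ↥H, ‖ξ (Quotient.out q * ↑h)‖ ^ 2 ∂ν with hB_def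
  have key : ∀ (F : G → ℝ) (x₀ : G) (h₀ : ↥H),
      ∫ h : ↥H, F (x₀ * ↑h₀ * ↑h) ∂ν = ∫ h : ↥H, F (x₀ * ↑h) ∂ν := by
    intro F x₀ h₀
    have hrw : ∀ h : ↥H, F (x₀ * ↑h₀ * ↑h) = (fun k : ↥H => F (x₀ * ↑k)) (h₀ * h) := by
      intro h; simp [mul_assoc]
    simp_rw [hrw]
    exact integral_mul_left_eq_self (μ := ν) (fun k : ↥H => F (x₀ * ↑k)) h₀
  have hA : ∀ x₀ : G, A (QuotientGroup.mk x₀) = ∫ h : ↥H, ‖Ig (x₀ * ↑h)‖ ^ 2 ∂ν := by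
    intro x₀
    obtain ⟨h₀, hh₀⟩ := QuotientGroup.mk_out_eq_mul H x₀
    simp only [hA_def, hh₀]
    exact key (fun s => ‖Ig s‖ ^ 2) x₀ h₀
  have hB : ∀ x₀ : G, B (QuotientGroup.mk x₀) = ∫ h : ↥H, ‖ξ (x₀ * ↑h)‖ ^ 2 ∂ν := by
    intro x₀
    obtain ⟨h₀, hh₀⟩ := QuotientGroup.mk_out_eq_mul H x₀
    simp only [hB_def, hh₀]
    exact key (fun s => ‖ξ s‖ ^ 2) x₀ h₀
  have h1 : ∫ s, ‖Ig s‖ ^ 2 ∂μ = ∫ q, A q ∂ρ := by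
    have := hcompat (fun s => ((‖Ig s‖ ^ 2 : ℝ) : ℂ))
      (Complex.continuous_ofReal.comp ((hIgcont.norm).pow 2)) hIgsq
      (fun q => ((A q : ℝ) : ℂ))
      (by
        intro x₀
        calc ((A (QuotientGroup.mk x₀) : ℝ) : ℂ)
            = ((∫ h : ↥H, ‖Ig (x₀ * ↑h)‖ ^ 2 ∂ν : ℝ) : ℂ) := by rw [hA x₀]
          _ = ∫ h : ↥H, ((‖Ig (x₀ * ↑h)‖ ^ 2 : ℝ) : ℂ) ∂ν := integral_ofReal.symm)
    rw [integral_complex_ofReal', integral_complex_ofReal'] at this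
    exact_mod_cast this
  have h2 : ∫ s, ‖ξ s‖ ^ 2 ∂μ = ∫ q, B q ∂ρ := by
    have := hcompat (fun s => ((‖ξ s‖ ^ 2 : ℝ) : ℂ))
      (Complex.continuous_ofReal.comp ((hξ.norm).pow 2)) hξsq
      (fun q => ((B q : ℝ) : ℂ))
      (by
        intro x₀
        calc ((B (QuotientGroup.mk x₀) : ℝ) : ℂ)
            = ((∫ h : ↥H, ‖ξ (x₀ * ↑h)‖ ^ 2 ∂ν : ℝ) : ℂ) := by rw [hB x₀]
          _ = ∫ h : ↥H, ((‖ξ (x₀ * ↑h)‖ ^ 2 : ℝ) : ℂ) ∂ν := integral_ofReal.symm)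
    rw [integral_complex_ofReal', integral_complex_ofReal'] at this
    exact_mod_cast this
  have hcore : ∀ q : G ⧸ H, A q ≤ C ^ 2 * B q := fun q =>
    stmt18_core H hHc hHn ν f hf hfc ξ hξ hξc C hC hCbound (Quotient.out q)
  by_cases hBint : Integrable B ρ
  · have hmono : ∫ q, A q ∂ρ ≤ ∫ q, C ^ 2 * B q ∂ρ := by
      apply integral_mono_of_nonneg
      · filter_upwards with q
        exact integral_nonneg fun h => by positivity
      · exact hBint.const_mul _
      · filter_upwards with q
        exact hcore q
    rw [integral_const_mul] at hmono
    calc ∫ s, ‖Ig s‖ ^ 2 ∂μ = ∫ q, A q ∂ρ := h1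
      _ ≤ C ^ 2 * ∫ q, B q ∂ρ := hmono
      _ = C ^ 2 * ∫ s, ‖ξ s‖ ^ 2 ∂μ := by rw [h2]
  · have hB0 : ∫ q, B q ∂ρ = 0 := integral_undef hBint
    have hξ0 : ∫ s, ‖ξ s‖ ^ 2 ∂μ = 0 := by rw [h2, hB0]
    have hxi : ∀ s, ξ s = 0 := by
      have hint : Integrable (fun s => ‖ξ s‖ ^ 2) μ := by
        apply ((hξ.norm).pow 2).integrable_of_hasCompactSupport
        have : (fun s => ‖ξ s‖ ^ 2) = (fun z : ℂ => ‖z‖ ^ 2) ∘ ξ := rfl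
        rw [show ((fun x => ‖ξ x‖) ^ 2 : G → ℝ) = fun s => ‖ξ s‖ ^ 2 from funext fun s => rfl,
          this]; exact hξc.comp_left (by simp)
      have hae := (integral_eq_zero_iff_of_nonneg (fun s => by positivity) hint).1 hξ0
      have heq : (fun s => ‖ξ s‖ ^ 2) = (0 : G → ℝ) :=
        (Continuous.ae_eq_iff_eq μ ((hξ.norm).pow 2) continuous_const).1 hae
      intro s
      have := congrFun heq s
      simpa using this
    have hIg0 : ∀ s, Ig s = 0 := fun s => by simp [hIg_def, hxi]
    calc ∫ s, ‖Ig s‖ ^ 2 ∂μ = ∫ s, (0 : ℝ) ∂μ := by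
          apply integral_congr_ae
          filter_upwards with s
          rw [hIg0 s]; simp
      _ = 0 := integral_zero _ _
      _ ≤ C ^ 2 * ∫ s, ‖ξ s‖ ^ 2 ∂μ := by rw [hξ0]; simp
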